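/- Let o_n denote the number of independent dominating sets of the ortho-chain hexagonal cactus O_n. Then o_1 = 5, o_2 = 19, and for every n ≥ 3, o_n = 3o_{n-1} + 3o_{n-2}. -/

import Mathlib

/-- `S` is an independent dominating set of `G`: pairwise non-adjacent, and every
vertex outside `S` has a neighbour in `S`. -/
def IsIndepDomSet {V : Type*} (G : SimpleGraph V) (S : Finset V) : Prop :=
  (∀ v ∈ S, ∀ w ∈ S, ¬ G.Adj v w) ∧ ∀ v, v ∉ S → ∃ w ∈ S, G.Adj v w

/-- The ortho-chain hexagonal cactus `O n`: `Sum.inl i` is the cut vertex `x i`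
(`0 ≤ i ≤ n`) and `Sum.inr (k, t)` for `t = 0, 1, 2, 3` is `a (k+1)`, `b (k+1)`,
`c (k+1)`, `d (k+1)` respectively (`0 ≤ k ≤ n-1`); the `i`-th hexagon
(`1 ≤ i ≤ n`) is the six-cycle `x (i-1) – x i – a i – b i – c i – d i – x (i-1)`. -/
def orthoHex (n : ℕ) : SimpleGraph (Fin (n + 1) ⊕ Fin n × Fin 4) :=
  SimpleGraph.fromRel fun p q =>
    match p, q with
    | Sum.inl i, Sum.inl j => (i : ℕ) + 1 = (j : ℕ)
    | Sum.inl i, Sum.inr (k, t) =>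
        ((i : ℕ) = (k : ℕ) + 1 ∧ t = 0) ∨ ((i : ℕ) = (k : ℕ) ∧ t = 3)
    | Sum.inr (k, t), Sum.inr (k', t') =>
        k = k' ∧ ((t = 0 ∧ t' = 1) ∨ (t = 1 ∧ t' = 2) ∨ (t = 2 ∧ t' = 3))
    | _, _ => False

/-- The number of independent dominating sets of the ortho-chain hexagonal cactus `O n`. -/
noncomputable def numIDSOrthoHex (n : ℕ) : ℕ :=
  Nat.card {S : Finset (Fin (n + 1) ⊕ Fin n × Fin 4) // IsIndepDomSet (orthoHex n) S}

-- auxiliary development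
namespace OrthoAux

inductive State : Type
  | I | D | U
deriving DecidableEq

instance : Fintype State :=
  ⟨⟨{.I, .D, .U}, by decide⟩, by intro x; cases x <;> decide⟩

abbrev V (n : ℕ) := Fin (n + 1) ⊕ Fin n × Fin 4

abbrev Cfg (n : ℕ) := (Fin (n + 1) → Bool) × (Fin n → Fin 4 → Bool)

def Indep6 (xl xr : Bool) (t : Fin 4 → Bool) : Prop :=
  ¬(xl = true ∧ xr = true) ∧ ¬(xr = true ∧ t 0 = true) ∧ ¬(t 0 = true ∧ t 1 = true) ∧
    ¬(t 1 = true ∧ t 2 = true) ∧ ¬(t 2 = true ∧ t 3 = true) ∧ ¬(t 3 = true ∧ xl = true)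

def Dom6 (xl xr : Bool) (t : Fin 4 → Bool) : Prop :=
  (t 0 = true ∨ t 1 = true ∨ xr = true) ∧ (t 0 = true ∨ t 1 = true ∨ t 2 = true) ∧
    (t 1 = true ∨ t 2 = true ∨ t 3 = true) ∧ (t 2 = true ∨ t 3 = true ∨ xl = true)

/-- x_i is in S or dominated from the left. -/
def LD (n : ℕ) (f : Fin (n + 1) → Bool) (g : Fin n → Fin 4 → Bool) (i : Fin (n + 1)) : Prop :=
  f i = true ∨ ∃ k : Fin n, k.succ = i ∧ (f k.castSucc = true ∨ g k 0 = true)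

def PointwiseOpen (n : ℕ) (f : Fin (n + 1) → Bool) (g : Fin n → Fin 4 → Bool) : Prop :=
  ∀ k : Fin n, Indep6 (f k.castSucc) (f k.succ) (g k) ∧ Dom6 (f k.castSucc) (f k.succ) (g k) ∧
    (LD n f g k.castSucc ∨ f k.succ = true ∨ g k 3 = true)

def Full (n : ℕ) (f : Fin (n + 1) → Bool) (g : Fin n → Fin 4 → Bool) : Prop :=
  PointwiseOpen n f g ∧ LD n f g (Fin.last n)

def stateOf (n : ℕ) (f : Fin (n + 1) → Bool) (g : Fin n → Fin 4 → Bool) : State :=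
  if f (Fin.last n) = true then .I
  else if ∃ k : Fin n, k.succ = Fin.last n ∧ (f k.castSucc = true ∨ g k 0 = true) then .D
  else .U

def StepP (s : State) (t : Fin 4 → Bool) (xr : Bool) : Prop :=
  Indep6 (s == State.I) xr t ∧ Dom6 (s == State.I) xr t ∧ (s ≠ State.U ∨ xr = true ∨ t 3 = true)

def nextState (s : State) (t : Fin 4 → Bool) (xr : Bool) : State :=
  if xr = true then .I else if s = State.I ∨ t 0 = true then .D else .U

instance Indep6.dec (xl xr : Bool) (t : Fin 4 → Bool) : Decidable (Indep6 xl xr t) := by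
  unfold Indep6; infer_instance

instance Dom6.dec (xl xr : Bool) (t : Fin 4 → Bool) : Decidable (Dom6 xl xr t) := by
  unfold Dom6; infer_instance

instance LD.dec (n : ℕ) (f : Fin (n + 1) → Bool) (g : Fin n → Fin 4 → Bool) (i : Fin (n + 1)) :
    Decidable (LD n f g i) := by
  unfold LD; infer_instance

instance PointwiseOpen.dec (n : ℕ) (f : Fin (n + 1) → Bool) (g : Fin n → Fin 4 → Bool) :
    Decidable (PointwiseOpen n f g) := by
  unfold PointwiseOpen; infer_instance

instance StepP.dec (s : State) (t : Fin 4 → Bool) (xr : Bool) : Decidable (StepP s t xr) := by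
  unfold StepP; infer_instance

noncomputable def Count (n : ℕ) (s : State) : ℕ :=
  Nat.card {p : Cfg n // PointwiseOpen n p.1 p.2 ∧ stateOf n p.1 p.2 = s}

end OrthoAux

namespace OrthoAux

lemma LD_castSucc (n : ℕ) (f : Fin (n + 2) → Bool) (g : Fin (n + 1) → Fin 4 → Bool)
    (i : Fin (n + 1)) :
    LD (n + 1) f g i.castSucc ↔ LD n (Fin.init f) (Fin.init g) i := by
  unfold LD
  constructor
  · rintro (h | ⟨k, hk, hm⟩)
    · exact Or.inl h
    · have hv : (k : ℕ) + 1 = (i : ℕ) := by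
        have := congrArg Fin.val hk; simpa using this
      have hkn : (k : ℕ) < n := by omega
      refine Or.inr ⟨⟨(k : ℕ), hkn⟩, ?_, ?_⟩
      · ext; simp [hv]
      · have hek : k = Fin.castSucc ⟨(k : ℕ), hkn⟩ := by ext; simp
        rw [hek] at hm
        exact hm
  · rintro (h | ⟨k, hk, hm⟩)
    · exact Or.inl h
    · refine Or.inr ⟨k.castSucc, ?_, hm⟩
      rw [Fin.succ_castSucc, hk]

lemma LD_last_state (n : ℕ) (f : Fin (n + 1) → Bool) (g : Fin n → Fin 4 → Bool) :
    LD n f g (Fin.last n) ↔ stateOf n f g ≠ .U := by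
  unfold LD stateOf
  split_ifs with h1 h2 <;> simp_all

lemma state_I_iff (n : ℕ) (f : Fin (n + 1) → Bool) (g : Fin n → Fin 4 → Bool) :
    f (Fin.last n) = (stateOf n f g == State.I) := by
  unfold stateOf
  split_ifs with h1 h2 <;> simp_all

lemma pointwise_succ (n : ℕ) (f : Fin (n + 2) → Bool) (g : Fin (n + 1) → Fin 4 → Bool) :
    PointwiseOpen (n + 1) f g ↔
      PointwiseOpen n (Fin.init f) (Fin.init g) ∧
        StepP (stateOf n (Fin.init f) (Fin.init g)) (g (Fin.last n)) (f (Fin.last (n + 1))) := by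
  have hsplit : ∀ P : Fin (n + 1) → Prop,
      (∀ k : Fin (n + 1), P k) ↔ (∀ k : Fin n, P k.castSucc) ∧ P (Fin.last n) := by
    intro P
    exact ⟨fun h => ⟨fun k => h _, h _⟩, fun h k => Fin.lastCases h.2 h.1 k⟩
  rw [PointwiseOpen, hsplit]
  have hI : f (Fin.castSucc (Fin.last n)) = (stateOf n (Fin.init f) (Fin.init g) == State.I) := by
    rw [← state_I_iff]; rfl
  constructor
  · rintro ⟨h1, h2⟩
    refine ⟨fun k => ?_, ?_⟩
    · obtain ⟨a, b, c⟩ := h1 k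
      rw [Fin.succ_castSucc] at a b c
      refine ⟨a, b, ?_⟩
      rcases c with c | c
      · exact Or.inl ((LD_castSucc n f g k.castSucc).1 c)
      · exact Or.inr c
    · obtain ⟨a, b, c⟩ := h2
      rw [Fin.succ_last] at a b c
      rw [hI] at a b
      refine ⟨a, b, ?_⟩
      rcases c with c | c
      · exact Or.inl ((LD_last_state n _ _).1 ((LD_castSucc n f g (Fin.last n)).1 c))
      · exact Or.inr c
  · rintro ⟨h1, h2⟩
    refine ⟨fun k => ?_, ?_⟩
    · obtain ⟨a, b, c⟩ := h1 k
      rw [Fin.succ_castSucc]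
      refine ⟨a, b, ?_⟩
      rcases c with c | c
      · exact Or.inl ((LD_castSucc n f g k.castSucc).2 c)
      · exact Or.inr c
    · obtain ⟨a, b, c⟩ := h2
      rw [← hI] at a b
      rw [Fin.succ_last]
      refine ⟨a, b, ?_⟩
      rcases c with c | c
      · exact Or.inl ((LD_castSucc n f g (Fin.last n)).2 ((LD_last_state n _ _).2 c))
      · exact Or.inr c

lemma state_succ (n : ℕ) (f : Fin (n + 2) → Bool) (g : Fin (n + 1) → Fin 4 → Bool) :
    stateOf (n + 1) f g =
      nextState (stateOf n (Fin.init f) (Fin.init g)) (g (Fin.last n)) (f (Fin.last (n + 1))) := by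
  have hI : f (Fin.castSucc (Fin.last n)) = (stateOf n (Fin.init f) (Fin.init g) == State.I) := by
    rw [← state_I_iff]; rfl
  set s := stateOf n (Fin.init f) (Fin.init g) with hs
  rw [show stateOf (n + 1) f g =
      (if f (Fin.last (n + 1)) = true then State.I
       else if ∃ k : Fin (n + 1), k.succ = Fin.last (n + 1) ∧
          (f k.castSucc = true ∨ g k 0 = true) then State.D else State.U) from rfl]
  unfold nextState
  by_cases hx : f (Fin.last (n + 1)) = true
  · simp [hx]
  · rw [if_neg hx, if_neg hx]
    have hex : (∃ k : Fin (n + 1), k.succ = Fin.last (n + 1) ∧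
        (f k.castSucc = true ∨ g k 0 = true)) ↔
        (s = State.I ∨ g (Fin.last n) 0 = true) := by
      constructor
      · rintro ⟨k, hk, hm⟩
        have hkl : k = Fin.last n := by
          have := congrArg Fin.val hk; simp at this; ext; simpa using this
        subst hkl
        rcases hm with hm | hm
        · left
          rw [hI] at hm; simpa using hm
        · exact Or.inr hm
      · rintro (h | h)
        · refine ⟨Fin.last n, by rw [Fin.succ_last], Or.inl ?_⟩
          rw [hI, h]; rfl
        · exact ⟨Fin.last n, by rw [Fin.succ_last], Or.inr h⟩
    rw [if_congr hex rfl rfl]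

end OrthoAux

namespace OrthoAux

def snocCfg (n : ℕ) : Cfg (n + 1) ≃ Cfg n × ((Fin 4 → Bool) × Bool) where
  toFun q := ((Fin.init q.1, Fin.init q.2), (q.2 (Fin.last n), q.1 (Fin.last (n + 1))))
  invFun r := (Fin.snoc r.1.1 r.2.2, Fin.snoc r.1.2 r.2.1)
  left_inv q := by
    obtain ⟨f, g⟩ := q
    simp [Fin.snoc_init_self]
  right_inv r := by
    simp [Fin.init_snoc, Fin.snoc_last]

lemma sum_state (F : State → ℕ) : ∑ s : State, F s = F .I + F .D + F .U := by
  rw [show (Finset.univ : Finset State) = {.I, .D, .U} from rfl]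
  rw [Finset.sum_insert (by decide), Finset.sum_insert (by decide), Finset.sum_singleton]
  ring

def splitEquiv {α β : Type*} (P : α → Prop) (st : α → State) (Q : State → β → Prop) :
    {r : α × β // P r.1 ∧ Q (st r.1) r.2} ≃
      Σ s : State, {a : α // P a ∧ st a = s} × {b : β // Q s b} where
  toFun r := ⟨st r.1.1, ⟨⟨r.1.1, r.2.1, rfl⟩, ⟨r.1.2, r.2.2⟩⟩⟩
  invFun x := ⟨(x.2.1.1, x.2.2.1), x.2.1.2.1, by rw [x.2.1.2.2]; exact x.2.2.2⟩
  left_inv := by rintro ⟨⟨a, b⟩, h⟩; rfl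
  right_inv := by rintro ⟨s, ⟨⟨a, ha, rfl⟩, ⟨b, hb⟩⟩⟩; rfl

lemma card_split {α β : Type*} [Finite α] [Finite β] (P : α → Prop) (st : α → State)
    (Q : State → β → Prop) :
    Nat.card {r : α × β // P r.1 ∧ Q (st r.1) r.2} =
      ∑ s : State, Nat.card {a : α // P a ∧ st a = s} * Nat.card {b : β // Q s b} := by
  classical
  have e2 : (Σ s : State, ({a : α // P a ∧ st a = s} × {b : β // Q s b})) ≃
      ({a : α // P a ∧ st a = .I} × {b : β // Q .I b}) ⊕
      (({a : α // P a ∧ st a = .D} × {b : β // Q .D b}) ⊕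
       ({a : α // P a ∧ st a = .U} × {b : β // Q .U b})) :=
    { toFun := fun x => match x with
        | ⟨.I, a⟩ => .inl a
        | ⟨.D, a⟩ => .inr (.inl a)
        | ⟨.U, a⟩ => .inr (.inr a)
      invFun := fun y => match y with
        | .inl a => ⟨.I, a⟩
        | .inr (.inl a) => ⟨.D, a⟩
        | .inr (.inr a) => ⟨.U, a⟩
      left_inv := by rintro ⟨s, a⟩; cases s <;> rfl
      right_inv := by rintro (a | a | a) <;> rfl }
  rw [Nat.card_congr ((splitEquiv P st Q).trans e2), Nat.card_sum, Nat.card_sum,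
    Nat.card_prod, Nat.card_prod, Nat.card_prod, sum_state]
  ring

noncomputable def W (s s' : State) : ℕ :=
  Nat.card {c : (Fin 4 → Bool) × Bool // StepP s c.1 c.2 ∧ nextState s c.1 c.2 = s'}

lemma count_succ (n : ℕ) (s' : State) :
    Count (n + 1) s' = ∑ s : State, Count n s * W s s' := by
  unfold Count W
  have e1 : {p : Cfg (n + 1) // PointwiseOpen (n + 1) p.1 p.2 ∧ stateOf (n + 1) p.1 p.2 = s'} ≃
      {r : Cfg n × ((Fin 4 → Bool) × Bool) //
        (PointwiseOpen n r.1.1 r.1.2 ∧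
          (StepP (stateOf n r.1.1 r.1.2) r.2.1 r.2.2 ∧
            nextState (stateOf n r.1.1 r.1.2) r.2.1 r.2.2 = s'))} := by
    refine (Equiv.subtypeEquiv (snocCfg n) ?_)
    intro p
    rw [pointwise_succ, state_succ]
    simp only [snocCfg, Equiv.coe_fn_mk]
    tauto
  rw [Nat.card_congr e1]
  exact card_split (fun p : Cfg n => PointwiseOpen n p.1 p.2)
    (fun p : Cfg n => stateOf n p.1 p.2)
    (fun s (c : (Fin 4 → Bool) × Bool) => StepP s c.1 c.2 ∧ nextState s c.1 c.2 = s')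

end OrthoAux

namespace OrthoAux

lemma W_values :
    W .I .I = 0 ∧ W .D .I = 2 ∧ W .U .I = 2 ∧
    W .I .D = 2 ∧ W .D .D = 2 ∧ W .U .D = 1 ∧
    W .I .U = 0 ∧ W .D .U = 1 ∧ W .U .U = 1 := by
  refine ⟨?_, ?_, ?_, ?_, ?_, ?_, ?_, ?_, ?_⟩ <;>
    · rw [W, Nat.card_eq_fintype_card]
      decide

lemma count_zero : Count 0 .I = 1 ∧ Count 0 .D = 0 ∧ Count 0 .U = 1 := by
  refine ⟨?_, ?_, ?_⟩ <;>
    · rw [Count, Nat.card_eq_fintype_card]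
      decide

end OrthoAux

namespace OrthoAux

lemma adj_cs_succ (n : ℕ) (k : Fin n) :
    (orthoHex n).Adj (.inl k.castSucc) (.inl k.succ) := by
  rw [orthoHex, SimpleGraph.fromRel_adj]
  refine ⟨by simp [Fin.ext_iff], Or.inl ?_⟩
  simp

lemma adj_succ_a (n : ℕ) (k : Fin n) :
    (orthoHex n).Adj (.inl k.succ) (.inr (k, 0)) := by
  rw [orthoHex, SimpleGraph.fromRel_adj]
  exact ⟨by simp, Or.inl (Or.inl ⟨by simp, rfl⟩)⟩

lemma adj_ab (n : ℕ) (k : Fin n) :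
    (orthoHex n).Adj (.inr (k, 0)) (.inr (k, 1)) := by
  rw [orthoHex, SimpleGraph.fromRel_adj]
  exact ⟨by simp, Or.inl ⟨rfl, Or.inl ⟨rfl, rfl⟩⟩⟩

lemma adj_bc (n : ℕ) (k : Fin n) :
    (orthoHex n).Adj (.inr (k, 1)) (.inr (k, 2)) := by
  rw [orthoHex, SimpleGraph.fromRel_adj]
  exact ⟨by simp, Or.inl ⟨rfl, Or.inr (Or.inl ⟨rfl, rfl⟩)⟩⟩

lemma adj_cd (n : ℕ) (k : Fin n) :
    (orthoHex n).Adj (.inr (k, 2)) (.inr (k, 3)) := by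
  rw [orthoHex, SimpleGraph.fromRel_adj]
  exact ⟨by simp, Or.inl ⟨rfl, Or.inr (Or.inr ⟨rfl, rfl⟩)⟩⟩

lemma adj_d_cs (n : ℕ) (k : Fin n) :
    (orthoHex n).Adj (.inr (k, 3)) (.inl k.castSucc) := by
  rw [orthoHex, SimpleGraph.fromRel_adj]
  exact ⟨by simp, Or.inr (Or.inr ⟨by simp, rfl⟩)⟩

end OrthoAux

namespace OrthoAux

lemma neighbors_a (n : ℕ) (k : Fin n) (w : V n) (h : (orthoHex n).Adj (.inr (k, 0)) w) :
    w = .inl k.succ ∨ w = .inr (k, 1) := by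
  rw [orthoHex, SimpleGraph.fromRel_adj] at h
  obtain ⟨hne, h | h⟩ := h <;> rcases w with j | ⟨k', t'⟩
  · exact h.elim
  · obtain ⟨rfl, h⟩ := h
    rcases h with ⟨-, rfl⟩ | ⟨h, -⟩ | ⟨h, -⟩
    · exact Or.inr rfl
    · exact absurd h (by decide)
    · exact absurd h (by decide)
  · rcases h with ⟨hj, -⟩ | ⟨-, h⟩
    · exact Or.inl (by rw [show j = k.succ from Fin.ext (by simpa using hj)])
    · exact absurd h (by decide)
  · obtain ⟨rfl, h⟩ := h
    rcases h with ⟨-, h⟩ | ⟨-, h⟩ | ⟨-, h⟩ <;> exact absurd h (by decide)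

lemma neighbors_b (n : ℕ) (k : Fin n) (w : V n) (h : (orthoHex n).Adj (.inr (k, 1)) w) :
    w = .inr (k, 0) ∨ w = .inr (k, 2) := by
  rw [orthoHex, SimpleGraph.fromRel_adj] at h
  obtain ⟨hne, h | h⟩ := h <;> rcases w with j | ⟨k', t'⟩
  · exact h.elim
  · obtain ⟨rfl, h⟩ := h
    rcases h with ⟨h, -⟩ | ⟨-, rfl⟩ | ⟨h, -⟩
    · exact absurd h (by decide)
    · exact Or.inr rfl
    · exact absurd h (by decide)
  · rcases h with ⟨-, h⟩ | ⟨-, h⟩ <;> exact absurd h (by decide)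
  · obtain ⟨rfl, h⟩ := h
    rcases h with ⟨rfl, -⟩ | ⟨-, h⟩ | ⟨-, h⟩
    · exact Or.inl rfl
    · exact absurd h (by decide)
    · exact absurd h (by decide)

lemma neighbors_c (n : ℕ) (k : Fin n) (w : V n) (h : (orthoHex n).Adj (.inr (k, 2)) w) :
    w = .inr (k, 1) ∨ w = .inr (k, 3) := by
  rw [orthoHex, SimpleGraph.fromRel_adj] at h
  obtain ⟨hne, h | h⟩ := h <;> rcases w with j | ⟨k', t'⟩
  · exact h.elim
  · obtain ⟨rfl, h⟩ := h
    rcases h with ⟨h, -⟩ | ⟨h, -⟩ | ⟨-, rfl⟩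
    · exact absurd h (by decide)
    · exact absurd h (by decide)
    · exact Or.inr rfl
  · rcases h with ⟨-, h⟩ | ⟨-, h⟩ <;> exact absurd h (by decide)
  · obtain ⟨rfl, h⟩ := h
    rcases h with ⟨-, h⟩ | ⟨rfl, -⟩ | ⟨-, h⟩
    · exact absurd h (by decide)
    · exact Or.inl rfl
    · exact absurd h (by decide)

lemma neighbors_d (n : ℕ) (k : Fin n) (w : V n) (h : (orthoHex n).Adj (.inr (k, 3)) w) :
    w = .inr (k, 2) ∨ w = .inl k.castSucc := by
  rw [orthoHex, SimpleGraph.fromRel_adj] at h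
  obtain ⟨hne, h | h⟩ := h <;> rcases w with j | ⟨k', t'⟩
  · exact h.elim
  · obtain ⟨rfl, h⟩ := h
    rcases h with ⟨h, -⟩ | ⟨h, -⟩ | ⟨h, -⟩ <;> exact absurd h (by decide)
  · rcases h with ⟨-, h⟩ | ⟨hj, -⟩
    · exact absurd h (by decide)
    · exact Or.inr (by rw [show j = k.castSucc from Fin.ext (by simpa using hj)])
  · obtain ⟨rfl, h⟩ := h
    rcases h with ⟨-, h⟩ | ⟨-, h⟩ | ⟨rfl, -⟩
    · exact absurd h (by decide)
    · exact absurd h (by decide)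
    · exact Or.inl rfl

lemma neighbors_x (n : ℕ) (i : Fin (n + 1)) (w : V n) (h : (orthoHex n).Adj (.inl i) w) :
    (∃ k : Fin n, k.succ = i ∧ (w = .inl k.castSucc ∨ w = .inr (k, 0))) ∨
      (∃ k : Fin n, k.castSucc = i ∧ (w = .inl k.succ ∨ w = .inr (k, 3))) := by
  rw [orthoHex, SimpleGraph.fromRel_adj] at h
  obtain ⟨hne, h | h⟩ := h <;> rcases w with j | ⟨k, t⟩
  · -- h : (i:ℕ)+1 = j
    have hiln : (i : ℕ) < n := by omega
    right
    exact ⟨⟨(i : ℕ), hiln⟩, Fin.ext (by simp), Or.inl (congrArg Sum.inl (Fin.ext (by simp [← h])))⟩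
  · -- h : rel (inl i) (inr (k,t))
    rcases h with ⟨hik, rfl⟩ | ⟨hik, rfl⟩
    · exact Or.inl ⟨k, Fin.ext (by simp [hik]), Or.inr rfl⟩
    · exact Or.inr ⟨k, Fin.ext (by simp [hik]), Or.inr rfl⟩
  · -- h : (j:ℕ)+1 = i
    have hjn : (j : ℕ) < n := by omega
    left
    exact ⟨⟨(j : ℕ), hjn⟩, Fin.ext (by simp [h]), Or.inl (congrArg Sum.inl (Fin.ext (by simp)))⟩
  · exact h.elim

end OrthoAux

namespace OrthoAux

lemma ids_iff (n : ℕ) (S : Finset (V n)) :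
    IsIndepDomSet (orthoHex n) S ↔
      Full n (fun i => decide (Sum.inl i ∈ S)) (fun k t => decide (Sum.inr (k, t) ∈ S)) := by
  simp only [IsIndepDomSet, Full, PointwiseOpen, Indep6, Dom6, LD, decide_eq_true_eq]
  constructor
  · rintro ⟨hind, hdom⟩
    refine ⟨fun k => ⟨⟨fun h => hind _ h.1 _ h.2 (adj_cs_succ n k),
        fun h => hind _ h.1 _ h.2 (adj_succ_a n k),
        fun h => hind _ h.1 _ h.2 (adj_ab n k),
        fun h => hind _ h.1 _ h.2 (adj_bc n k),
        fun h => hind _ h.1 _ h.2 (adj_cd n k),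
        fun h => hind _ h.1 _ h.2 (adj_d_cs n k)⟩, ⟨?_, ?_, ?_, ?_⟩, ?_⟩, ?_⟩
    · -- domination of a_k
      by_cases h0 : (Sum.inr (k, 0) : V n) ∈ S
      · exact Or.inl h0
      obtain ⟨w, hw, hadj⟩ := hdom _ h0
      rcases neighbors_a n k w hadj with rfl | rfl
      · exact Or.inr (Or.inr hw)
      · exact Or.inr (Or.inl hw)
    · -- domination of b_k
      by_cases h0 : (Sum.inr (k, 1) : V n) ∈ S
      · exact Or.inr (Or.inl h0)
      obtain ⟨w, hw, hadj⟩ := hdom _ h0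
      rcases neighbors_b n k w hadj with rfl | rfl
      · exact Or.inl hw
      · exact Or.inr (Or.inr hw)
    · -- domination of c_k
      by_cases h0 : (Sum.inr (k, 2) : V n) ∈ S
      · exact Or.inr (Or.inl h0)
      obtain ⟨w, hw, hadj⟩ := hdom _ h0
      rcases neighbors_c n k w hadj with rfl | rfl
      · exact Or.inl hw
      · exact Or.inr (Or.inr hw)
    · -- domination of d_k
      by_cases h0 : (Sum.inr (k, 3) : V n) ∈ S
      · exact Or.inr (Or.inl h0)
      obtain ⟨w, hw, hadj⟩ := hdom _ h0
      rcases neighbors_d n k w hadj with rfl | rfl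
      · exact Or.inl hw
      · exact Or.inr (Or.inr hw)
    · -- domination of x at k.castSucc
      by_cases hx : (Sum.inl k.castSucc : V n) ∈ S
      · exact Or.inl (Or.inl hx)
      obtain ⟨w, hw, hadj⟩ := hdom _ hx
      rcases neighbors_x n k.castSucc w hadj with ⟨k', hk', rfl | rfl⟩ | ⟨k', hk', rfl | rfl⟩
      · exact Or.inl (Or.inr ⟨k', hk', Or.inl hw⟩)
      · exact Or.inl (Or.inr ⟨k', hk', Or.inr hw⟩)
      · rw [Fin.castSucc_inj] at hk'
        subst hk'
        exact Or.inr (Or.inl hw)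
      · rw [Fin.castSucc_inj] at hk'
        subst hk'
        exact Or.inr (Or.inr hw)
    · -- domination of x at last
      by_cases hx : (Sum.inl (Fin.last n) : V n) ∈ S
      · exact Or.inl hx
      obtain ⟨w, hw, hadj⟩ := hdom _ hx
      rcases neighbors_x n (Fin.last n) w hadj with ⟨k', hk', rfl | rfl⟩ | ⟨k', hk', -⟩
      · exact Or.inr ⟨k', hk', Or.inl hw⟩
      · exact Or.inr ⟨k', hk', Or.inr hw⟩
      · exact absurd (congrArg Fin.val hk') (by simp; omega)
  · rintro ⟨hpw, hlast⟩
    have key : ∀ v w : V n,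
        (match v, w with
          | Sum.inl i, Sum.inl j => (i : ℕ) + 1 = (j : ℕ)
          | Sum.inl i, Sum.inr (k, t) =>
              ((i : ℕ) = (k : ℕ) + 1 ∧ t = 0) ∨ ((i : ℕ) = (k : ℕ) ∧ t = 3)
          | Sum.inr (k, t), Sum.inr (k', t') =>
              k = k' ∧ ((t = 0 ∧ t' = 1) ∨ (t = 1 ∧ t' = 2) ∨ (t = 2 ∧ t' = 3))
          | _, _ => False) → v ∈ S → w ∈ S → False := by
      rintro (i | ⟨k, t⟩) (j | ⟨k', t'⟩) h hv hw
      · -- x_i, x_j with i+1 = j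
        have hin : (i : ℕ) < n := by omega
        set k : Fin n := ⟨(i : ℕ), hin⟩ with hk
        have h1 : (Sum.inl k.castSucc : V n) ∈ S := by
          have : k.castSucc = i := Fin.ext (by simp [hk])
          rwa [this]
        have h2 : (Sum.inl k.succ : V n) ∈ S := by
          have : k.succ = j := Fin.ext (by simp [hk, ← h])
          rwa [this]
        exact (hpw k).1.1 ⟨h1, h2⟩
      · rcases h with ⟨hik, rfl⟩ | ⟨hik, rfl⟩
        · refine (hpw k').1.2.1 ⟨?_, hw⟩
          have : k'.succ = i := Fin.ext (by simp [hik])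
          rwa [this]
        · refine (hpw k').1.2.2.2.2.2 ⟨hw, ?_⟩
          have : k'.castSucc = i := Fin.ext (by simp [hik])
          rwa [this]
      · exact h
      · obtain ⟨rfl, h⟩ := h
        rcases h with ⟨rfl, rfl⟩ | ⟨rfl, rfl⟩ | ⟨rfl, rfl⟩
        · exact (hpw k).1.2.2.1 ⟨hv, hw⟩
        · exact (hpw k).1.2.2.2.1 ⟨hv, hw⟩
        · exact (hpw k).1.2.2.2.2.1 ⟨hv, hw⟩
    constructor
    · intro v hv w hw hadj
      rw [orthoHex, SimpleGraph.fromRel_adj] at hadj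
      obtain ⟨-, h | h⟩ := hadj
      · exact key v w h hv hw
      · exact key w v h hw hv
    · intro v hv
      rcases v with i | ⟨k, t⟩
      · -- cut vertex
        refine Fin.lastCases ?_ ?_ i hv
        · intro hv
          rcases hlast with h | ⟨k, hk, hm | hm⟩
          · exact absurd h hv
          · exact ⟨_, hm, by rw [← hk]; exact (adj_cs_succ n k).symm⟩
          · exact ⟨_, hm, by rw [← hk]; exact adj_succ_a n k⟩
        · intro j hv
          rcases (hpw j).2.2 with (h | ⟨k, hk, hm | hm⟩) | h | h
          · exact absurd h hv
          · exact ⟨_, hm, by rw [← hk]; exact (adj_cs_succ n k).symm⟩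
          · exact ⟨_, hm, by rw [← hk]; exact adj_succ_a n k⟩
          · exact ⟨_, h, adj_cs_succ n j⟩
          · exact ⟨_, h, (adj_d_cs n j).symm⟩
      · -- interior vertex
        fin_cases t
        · rcases (hpw k).2.1.1 with h | h | h
          · exact absurd h hv
          · exact ⟨_, h, adj_ab n k⟩
          · exact ⟨_, h, (adj_succ_a n k).symm⟩
        · rcases (hpw k).2.1.2.1 with h | h | h
          · exact ⟨_, h, (adj_ab n k).symm⟩
          · exact absurd h hv
          · exact ⟨_, h, adj_bc n k⟩
        · rcases (hpw k).2.1.2.2.1 with h | h | h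
          · exact ⟨_, h, (adj_bc n k).symm⟩
          · exact absurd h hv
          · exact ⟨_, h, adj_cd n k⟩
        · rcases (hpw k).2.1.2.2.2 with h | h | h
          · exact ⟨_, h, (adj_cd n k).symm⟩
          · exact absurd h hv
          · exact ⟨_, h, adj_d_cs n k⟩

end OrthoAux

namespace OrthoAux

def cfgEquiv (n : ℕ) : Finset (V n) ≃ Cfg n where
  toFun S := (fun i => decide (Sum.inl i ∈ S), fun k t => decide (Sum.inr (k, t) ∈ S))
  invFun p := Finset.univ.filter fun v =>
    Sum.elim (fun i => p.1 i) (fun kt => p.2 kt.1 kt.2) v = true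
  left_inv S := by
    ext v
    rcases v with i | ⟨k, t⟩ <;> simp
  right_inv p := by
    obtain ⟨f, g⟩ := p
    simp only [Prod.mk.injEq]
    constructor
    · funext i; simp
    · funext k t; simp

lemma card_ne_U {α : Type*} [Finite α] (P : α → Prop) (st : α → State) :
    Nat.card {a : α // P a ∧ st a ≠ .U} =
      Nat.card {a : α // P a ∧ st a = .I} + Nat.card {a : α // P a ∧ st a = .D} := by
  have e : {a : α // P a ∧ st a ≠ .U} ≃
      {a : α // P a ∧ st a = .I} ⊕ {a : α // P a ∧ st a = .D} :=
    { toFun := fun x => if h : st x.1 = .I then .inl ⟨x.1, x.2.1, h⟩ else .inr ⟨x.1, x.2.1, by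
        cases hs : st x.1
        · exact absurd hs h
        · rfl
        · exact absurd hs x.2.2⟩
      invFun := fun y => y.elim (fun a => ⟨a.1, a.2.1, by rw [a.2.2]; simp⟩)
        (fun a => ⟨a.1, a.2.1, by rw [a.2.2]; simp⟩)
      left_inv := by
        rintro ⟨a, ha, hs⟩
        by_cases h : st a = .I <;> simp [h]
      right_inv := by
        rintro (⟨a, ha, hs⟩ | ⟨a, ha, hs⟩) <;> simp [hs] }
  rw [Nat.card_congr e, Nat.card_sum]

lemma numIDS_eq (n : ℕ) : numIDSOrthoHex n = Count n .I + Count n .D := by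
  rw [numIDSOrthoHex, Count, Count]
  have e : {S : Finset (V n) // IsIndepDomSet (orthoHex n) S} ≃
      {p : Cfg n // PointwiseOpen n p.1 p.2 ∧ stateOf n p.1 p.2 ≠ .U} := by
    refine Equiv.subtypeEquiv (cfgEquiv n) fun S => ?_
    rw [ids_iff]
    unfold Full
    rw [LD_last_state]
    exact Iff.rfl
  rw [Nat.card_congr e]
  exact card_ne_U _ _

lemma count_succ' (n : ℕ) :
    Count (n + 1) .I = 2 * Count n .D + 2 * Count n .U ∧
    Count (n + 1) .D = 2 * Count n .I + 2 * Count n .D + Count n .U ∧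
    Count (n + 1) .U = Count n .D + Count n .U := by
  obtain ⟨w1, w2, w3, w4, w5, w6, w7, w8, w9⟩ := W_values
  refine ⟨?_, ?_, ?_⟩ <;> rw [count_succ, sum_state] <;>
    simp only [w1, w2, w3, w4, w5, w6, w7, w8, w9] <;> ring

end OrthoAux

/-- `o 1 = 5`, `o 2 = 19`, and `o n = 3·o (n-1) + 3·o (n-2)` for `n ≥ 3`, where
`o n` is the number of independent dominating sets of `O n`. -/
theorem numIDSOrthoHex_recurrence :
    numIDSOrthoHex 1 = 5 ∧ numIDSOrthoHex 2 = 19 ∧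
      ∀ n : ℕ, 3 ≤ n →
        numIDSOrthoHex n = 3 * numIDSOrthoHex (n - 1) + 3 * numIDSOrthoHex (n - 2) := by
  open OrthoAux in
  obtain ⟨b1, b2, b3⟩ := OrthoAux.count_zero
  have s1 : Count 1 .I = 2 * Count 0 .D + 2 * Count 0 .U := (count_succ' 0).1
  have s2 : Count 1 .D = 2 * Count 0 .I + 2 * Count 0 .D + Count 0 .U := (count_succ' 0).2.1
  have s3 : Count 1 .U = Count 0 .D + Count 0 .U := (count_succ' 0).2.2
  have t1 : Count 2 .I = 2 * Count 1 .D + 2 * Count 1 .U := (count_succ' 1).1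
  have t2 : Count 2 .D = 2 * Count 1 .I + 2 * Count 1 .D + Count 1 .U := (count_succ' 1).2.1
  have t3 : Count 2 .U = Count 1 .D + Count 1 .U := (count_succ' 1).2.2
  refine ⟨?_, ?_, ?_⟩
  · rw [OrthoAux.numIDS_eq]
    omega
  · rw [OrthoAux.numIDS_eq]
    omega
  · intro n hn
    obtain ⟨m, rfl⟩ : ∃ m, n = m + 3 := ⟨n - 3, by omega⟩
    have h1 : m + 3 - 1 = m + 2 := rfl
    have h2 : m + 3 - 2 = m + 1 := rfl
    rw [h1, h2, OrthoAux.numIDS_eq, OrthoAux.numIDS_eq, OrthoAux.numIDS_eq]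
    have d1 : Count (m + 1) .I = 2 * Count m .D + 2 * Count m .U := (count_succ' m).1
    have d2 : Count (m + 1) .D = 2 * Count m .I + 2 * Count m .D + Count m .U := (count_succ' m).2.1
    have d3 : Count (m + 1) .U = Count m .D + Count m .U := (count_succ' m).2.2
    have a1 : Count (m + 2) .I = 2 * Count (m + 1) .D + 2 * Count (m + 1) .U :=
      (count_succ' (m + 1)).1
    have a2 : Count (m + 2) .D = 2 * Count (m + 1) .I + 2 * Count (m + 1) .D + Count (m + 1) .U :=
      (count_succ' (m + 1)).2.1
    have a3 : Count (m + 2) .U = Count (m + 1) .D + Count (m + 1) .U := (count_succ' (m + 1)).2.2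
    have c1 : Count (m + 3) .I = 2 * Count (m + 2) .D + 2 * Count (m + 2) .U :=
      (count_succ' (m + 2)).1
    have c2 : Count (m + 3) .D = 2 * Count (m + 2) .I + 2 * Count (m + 2) .D + Count (m + 2) .U :=
      (count_succ' (m + 2)).2.1
    have c3 : Count (m + 3) .U = Count (m + 2) .D + Count (m + 2) .U := (count_succ' (m + 2)).2.2
    omega
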